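/- arXiv:1305.3694 — 2 statements merged into one kernel-verified Lean document; each statement's English description precedes it below -/
import Mathlib

section
/- Let R₁ and R₂ be independent nonnegative real-valued random variables on a probability space such that P[Rᵢ > r] = exp(−π λᵢ r²) for all r ≥ 0, where λ₁, λ₂ > 0, and let a > 0 and D ≥ 0 be reals. Then for every x ≥ D, the conditional probability P[R₁ ≤ x | R₂ > √a · R₁ and R₁ > D] equals 1 − exp(−π (λ₁ + λ₂ a) (x² − D²)). In particular, conditional on the event {R₂ > √a·R₁, R₁ > D} (which has positive probability), R₁ has density f(x) = 2π (λ₁ + λ₂ a) x · exp(−π (λ₁ + λ₂ a) x²) / exp(−π (λ₁ + λ₂ a) D²) on (D, ∞). -/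
open MeasureTheory ProbabilityTheory Real Set

section SDHelpers
open Filter

lemma sd_hasDerivAt (b t : ℝ) :
    HasDerivAt (fun t : ℝ => -Real.exp (-(b * t ^ 2))) (2 * b * t * Real.exp (-(b * t ^ 2))) t := by
  have h : HasDerivAt (fun t : ℝ => -(b * t ^ 2)) (-(b * (2 * t))) t := by
    have := (hasDerivAt_pow 2 t).const_mul b
    exact this.neg.congr_deriv (by norm_num)
  have h2 := (h.exp).neg
  exact h2.congr_deriv (by ring)

lemma sd_tendsto (b : ℝ) (hb : 0 < b) :
    Tendsto (fun t : ℝ => -Real.exp (-(b * t ^ 2))) atTop (nhds 0) := by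
  have h1 : Tendsto (fun t : ℝ => b * t ^ 2) atTop atTop :=
    (tendsto_pow_atTop two_ne_zero).const_mul_atTop hb
  have h2 : Tendsto (fun t : ℝ => Real.exp (-(b * t ^ 2))) atTop (nhds 0) :=
    Real.tendsto_exp_atBot.comp (tendsto_neg_atTop_atBot.comp h1)
  simpa using h2.neg

lemma sd_integrableOn (b : ℝ) (hb : 0 < b) (r : ℝ) (hr : 0 ≤ r) :
    IntegrableOn (fun t => 2 * b * t * Real.exp (-(b * t ^ 2))) (Ioi r) := by
  refine integrableOn_Ioi_deriv_of_nonneg' (g := fun t => -Real.exp (-(b * t ^ 2)))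
    (fun x _ => sd_hasDerivAt b x) (fun x hx => ?_) (sd_tendsto b hb)
  have hx0 : 0 ≤ x := hr.trans (le_of_lt hx)
  positivity

lemma sd_integral_Ioi (b : ℝ) (hb : 0 < b) (r : ℝ) (hr : 0 ≤ r) :
    ∫ t in Ioi r, 2 * b * t * Real.exp (-(b * t ^ 2)) = Real.exp (-(b * r ^ 2)) := by
  have := integral_Ioi_of_hasDerivAt_of_nonneg' (g := fun t => -Real.exp (-(b * t ^ 2)))
    (g' := fun t => 2 * b * t * Real.exp (-(b * t ^ 2)))
    (fun x _ => sd_hasDerivAt b x) (fun x hx => by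
      have hx0 : 0 ≤ x := hr.trans (le_of_lt hx); positivity) (sd_tendsto b hb)
  simpa using this

lemma sd_intervalIntegral (b D x : ℝ) :
    ∫ t in D..x, 2 * b * t * Real.exp (-(b * t ^ 2)) =
      Real.exp (-(b * D ^ 2)) - Real.exp (-(b * x ^ 2)) := by
  have hcont : Continuous (fun t : ℝ => 2 * b * t * Real.exp (-(b * t ^ 2))) := by
    fun_prop
  rw [intervalIntegral.integral_eq_sub_of_hasDerivAt
    (f := fun t => -Real.exp (-(b * t ^ 2))) (fun x _ => sd_hasDerivAt b x)
    (hcont.intervalIntegrable D x)]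
  ring

lemma sd_law {Ω : Type*} [MeasurableSpace Ω] (μ : Measure Ω) [IsProbabilityMeasure μ]
    (R : Ω → ℝ) (hm : Measurable R) (hpos : ∀ ω, 0 ≤ R ω) (lam : ℝ) (hlam : 0 < lam)
    (hccdf : ∀ r : ℝ, 0 ≤ r → μ {ω | r < R ω} = ENNReal.ofReal (Real.exp (-(π * lam * r ^ 2)))) :
    μ.map R = volume.withDensity
      (fun t => ENNReal.ofReal (2 * (π * lam) * t * Real.exp (-(π * lam * t ^ 2)))) := by
  set b : ℝ := π * lam with hbdef
  have hb : 0 < b := by positivity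
  have hcont : Continuous (fun t : ℝ => 2 * b * t * Real.exp (-(b * t ^ 2))) := by fun_prop
  haveI : IsProbabilityMeasure (μ.map R) := Measure.isProbabilityMeasure_map hm.aemeasurable
  refine Measure.ext_of_Iic _ _ (fun x => ?_)
  rw [Measure.map_apply hm measurableSet_Iic,
    withDensity_apply _ measurableSet_Iic]
  have hzero : ∀ y : ℝ, y ≤ 0 →
      ENNReal.ofReal (2 * (π * lam) * y * Real.exp (-(π * lam * y ^ 2))) = 0 := by
    intro y hy
    apply ENNReal.ofReal_eq_zero.mpr
    have : 2 * (π * lam) * y ≤ 0 := by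
      apply mul_nonpos_of_nonneg_of_nonpos (by positivity) hy
    exact mul_nonpos_of_nonpos_of_nonneg this (Real.exp_nonneg _)
  rcases lt_or_ge x 0 with hx | hx
  · have h1 : R ⁻¹' Iic x = ∅ := by
      ext ω; simp only [mem_preimage, mem_Iic, mem_empty_iff_false, iff_false, not_le]
      exact lt_of_lt_of_le hx (hpos ω)
    rw [h1, measure_empty]
    rw [setLIntegral_congr_fun measurableSet_Iic
      (fun y (hy : y ∈ Iic x) => hzero y (le_of_lt (lt_of_le_of_lt hy hx)))]
    simp
  · -- LHS
    have hL : μ (R ⁻¹' Iic x) = ENNReal.ofReal (1 - Real.exp (-(b * x ^ 2))) := by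
      have hcpl : R ⁻¹' Iic x = {ω | x < R ω}ᶜ := by
        ext ω; simp [not_lt]
      have hms : MeasurableSet {ω | x < R ω} := hm measurableSet_Ioi
      rw [hcpl, measure_compl hms (measure_ne_top μ _), hccdf x hx, measure_univ]
      rw [← ENNReal.ofReal_one, ← ENNReal.ofReal_sub _ (Real.exp_nonneg _)]
    rw [hL]
    -- RHS
    rw [← Iic_union_Ioc_eq_Iic hx, lintegral_union measurableSet_Ioc (Iic_disjoint_Ioc le_rfl)]
    rw [setLIntegral_congr_fun measurableSet_Iic
      (fun y (hy : y ∈ Iic 0) => hzero y hy), lintegral_zero, zero_add]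
    rw [← ofReal_integral_eq_lintegral_ofReal
      (hcont.integrableOn_Ioc)
      (ae_restrict_of_forall_mem measurableSet_Ioc (fun y hy => by
        have : (0:ℝ) ≤ y := le_of_lt hy.1
        positivity))]
    rw [← intervalIntegral.integral_of_le hx, sd_intervalIntegral]
    norm_num

lemma sd_event {Ω : Type*} [MeasurableSpace Ω] (μ : Measure Ω) [IsProbabilityMeasure μ]
    (R₁ R₂ : Ω → ℝ) (hm₁ : Measurable R₁) (hm₂ : Measurable R₂)
    (hpos₁ : ∀ ω, 0 ≤ R₁ ω) (hpos₂ : ∀ ω, 0 ≤ R₂ ω)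
    (hindep : IndepFun R₁ R₂ μ)
    (lam₁ lam₂ : ℝ) (hlam₁ : 0 < lam₁) (hlam₂ : 0 < lam₂)
    (hccdf₁ : ∀ r : ℝ, 0 ≤ r → μ {ω | r < R₁ ω} = ENNReal.ofReal (Real.exp (-(π * lam₁ * r ^ 2))))
    (hccdf₂ : ∀ r : ℝ, 0 ≤ r → μ {ω | r < R₂ ω} = ENNReal.ofReal (Real.exp (-(π * lam₂ * r ^ 2))))
    (a : ℝ) (ha : 0 < a) (r : ℝ) (hr : 0 ≤ r) :
    μ {ω | Real.sqrt a * R₁ ω < R₂ ω ∧ r < R₁ ω} =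
      ENNReal.ofReal (lam₁ / (lam₁ + lam₂ * a) *
        Real.exp (-(π * (lam₁ + lam₂ * a) * r ^ 2))) := by
  set c : ℝ := lam₁ + lam₂ * a with hcdef
  have hc : 0 < c := by positivity
  set S : Set (ℝ × ℝ) := {p | Real.sqrt a * p.1 < p.2 ∧ r < p.1} with hSdef
  have hS : MeasurableSet S :=
    (measurableSet_lt (measurable_fst.const_mul _) measurable_snd).inter
      (measurableSet_lt measurable_const measurable_fst)
  have hpre : {ω | Real.sqrt a * R₁ ω < R₂ ω ∧ r < R₁ ω}
      = (fun ω => (R₁ ω, R₂ ω)) ⁻¹' S := rfl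
  have hmap := (indepFun_iff_map_prod_eq_prod_map_map hm₁.aemeasurable hm₂.aemeasurable).mp hindep
  rw [hpre, ← Measure.map_apply (hm₁.prodMk hm₂) hS, hmap, Measure.prod_apply hS]
  -- inner measure as indicator
  have hinner : ∀ t : ℝ, (μ.map R₂) (Prod.mk t ⁻¹' S)
      = (Ioi r).indicator (fun t => (μ.map R₂) (Ioi (Real.sqrt a * t))) t := by
    intro t
    by_cases ht : r < t
    · have : Prod.mk t ⁻¹' S = Ioi (Real.sqrt a * t) := by
        ext y; simp [hSdef, ht]
      rw [this, Set.indicator_of_mem (mem_Ioi.mpr ht)]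
    · have : Prod.mk t ⁻¹' S = ∅ := by
        ext y; simp [hSdef, ht]
      rw [this, measure_empty, Set.indicator_of_notMem (by simpa using ht)]
  rw [lintegral_congr hinner, lintegral_indicator measurableSet_Ioi]
  -- inner value on Ioi r
  have hval : ∀ t ∈ Ioi r, (μ.map R₂) (Ioi (Real.sqrt a * t))
      = ENNReal.ofReal (Real.exp (-(π * (lam₂ * a) * t ^ 2))) := by
    intro t ht
    have ht0 : 0 ≤ t := hr.trans (le_of_lt ht)
    have hst : 0 ≤ Real.sqrt a * t := mul_nonneg (Real.sqrt_nonneg a) ht0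
    rw [Measure.map_apply hm₂ measurableSet_Ioi]
    have : R₂ ⁻¹' Ioi (Real.sqrt a * t) = {ω | Real.sqrt a * t < R₂ ω} := rfl
    rw [this, hccdf₂ _ hst]
    congr 2
    rw [mul_pow, Real.sq_sqrt ha.le]
    ring
  rw [setLIntegral_congr_fun measurableSet_Ioi hval]
  -- substitute density of law of R₁
  rw [sd_law μ R₁ hm₁ hpos₁ lam₁ hlam₁ hccdf₁, restrict_withDensity measurableSet_Ioi,
    lintegral_withDensity_eq_lintegral_mul _
      (by fun_prop : Measurable fun t => ENNReal.ofReal (2 * (π * lam₁) * t * Real.exp (-(π * lam₁ * t ^ 2))))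
      (by fun_prop : Measurable fun t => ENNReal.ofReal (Real.exp (-(π * (lam₂ * a) * t ^ 2))))]
  have hprod : ∀ t ∈ Ioi r,
      ENNReal.ofReal (2 * (π * lam₁) * t * Real.exp (-(π * lam₁ * t ^ 2))) *
        ENNReal.ofReal (Real.exp (-(π * (lam₂ * a) * t ^ 2)))
      = ENNReal.ofReal (lam₁ / c * (2 * (π * c) * t * Real.exp (-(π * c * t ^ 2)))) := by
    intro t ht
    have ht0 : 0 ≤ t := hr.trans (le_of_lt ht)
    rw [← ENNReal.ofReal_mul (by positivity)]
    congr 1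
    rw [mul_assoc (2 * (π * lam₁) * t), ← Real.exp_add]
    rw [show -(π * lam₁ * t ^ 2) + -(π * (lam₂ * a) * t ^ 2) = -(π * c * t ^ 2) by
      rw [hcdef]; ring]
    field_simp
  simp only [Pi.mul_apply]
  rw [setLIntegral_congr_fun measurableSet_Ioi hprod]
  rw [← ofReal_integral_eq_lintegral_ofReal
    (((sd_integrableOn (π * c) (by positivity) r hr).const_mul (lam₁ / c)))
    (ae_restrict_of_forall_mem measurableSet_Ioi (fun t ht => by
      have ht0 : 0 ≤ t := hr.trans (le_of_lt ht); positivity))]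
  rw [integral_const_mul, sd_integral_Ioi (π * c) (by positivity) r hr]

end SDHelpers

/-- If `R₁, R₂` are independent nonnegative random variables with
`P[Rᵢ > r] = e^(−π λᵢ r²)` for all `r ≥ 0` (`λ₁, λ₂ > 0`), `a > 0`, `D ≥ 0`,
then the event `E = {R₂ > √a R₁ ∧ R₁ > D}` has positive probability, the conditional
probability `P[R₁ ≤ x | E]` equals `1 − e^(−π(λ₁+λ₂a)(x²−D²))` for every `x ≥ D`, and
conditional on `E` the variable `R₁` has density
`f(x) = 2π(λ₁+λ₂a) x e^(−π(λ₁+λ₂a)x²) / e^(−π(λ₁+λ₂a)D²)` on `(D, ∞)`. -/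
theorem conditional_serving_distance_distribution {Ω : Type*} [MeasurableSpace Ω]
    (μ : Measure Ω) [IsProbabilityMeasure μ]
    (R₁ R₂ : Ω → ℝ) (hm₁ : Measurable R₁) (hm₂ : Measurable R₂)
    (hpos₁ : ∀ ω, 0 ≤ R₁ ω) (hpos₂ : ∀ ω, 0 ≤ R₂ ω)
    (hindep : IndepFun R₁ R₂ μ)
    (lam₁ lam₂ : ℝ) (hlam₁ : 0 < lam₁) (hlam₂ : 0 < lam₂)
    (hccdf₁ : ∀ r : ℝ, 0 ≤ r → μ {ω | r < R₁ ω} = ENNReal.ofReal (Real.exp (-π * lam₁ * r ^ 2)))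
    (hccdf₂ : ∀ r : ℝ, 0 ≤ r → μ {ω | r < R₂ ω} = ENNReal.ofReal (Real.exp (-π * lam₂ * r ^ 2)))
    (a D : ℝ) (ha : 0 < a) (hD : 0 ≤ D) :
    0 < μ {ω | Real.sqrt a * R₁ ω < R₂ ω ∧ D < R₁ ω} ∧
    (∀ x : ℝ, D ≤ x →
      (μ[|{ω | Real.sqrt a * R₁ ω < R₂ ω ∧ D < R₁ ω}]) {ω | R₁ ω ≤ x} =
        ENNReal.ofReal (1 - Real.exp (-π * (lam₁ + lam₂ * a) * (x ^ 2 - D ^ 2)))) ∧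
    (∀ x : ℝ, D ≤ x →
      (μ[|{ω | Real.sqrt a * R₁ ω < R₂ ω ∧ D < R₁ ω}]) {ω | R₁ ω ≤ x} =
        ENNReal.ofReal (∫ t in D..x,
          2 * π * (lam₁ + lam₂ * a) * t * Real.exp (-π * (lam₁ + lam₂ * a) * t ^ 2) /
            Real.exp (-π * (lam₁ + lam₂ * a) * D ^ 2))) := by
  set c : ℝ := lam₁ + lam₂ * a with hcdef
  have hc : 0 < c := by positivity
  have hccdf₁' : ∀ r : ℝ, 0 ≤ r →
      μ {ω | r < R₁ ω} = ENNReal.ofReal (Real.exp (-(π * lam₁ * r ^ 2))) := by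
    intro r hr; rw [hccdf₁ r hr]; congr 2; ring
  have hccdf₂' : ∀ r : ℝ, 0 ≤ r →
      μ {ω | r < R₂ ω} = ENNReal.ofReal (Real.exp (-(π * lam₂ * r ^ 2))) := by
    intro r hr; rw [hccdf₂ r hr]; congr 2; ring
  have hE : ∀ r : ℝ, 0 ≤ r →
      μ {ω | Real.sqrt a * R₁ ω < R₂ ω ∧ r < R₁ ω} =
        ENNReal.ofReal (lam₁ / c * Real.exp (-(π * c * r ^ 2))) :=
    fun r hr => sd_event μ R₁ R₂ hm₁ hm₂ hpos₁ hpos₂ hindep lam₁ lam₂ hlam₁ hlam₂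
      hccdf₁' hccdf₂' a ha r hr
  have hmeasE : MeasurableSet {ω | Real.sqrt a * R₁ ω < R₂ ω ∧ D < R₁ ω} :=
    (measurableSet_lt (hm₁.const_mul _) hm₂).inter (measurableSet_lt measurable_const hm₁)
  have key : ∀ x : ℝ, D ≤ x →
      (μ[|{ω | Real.sqrt a * R₁ ω < R₂ ω ∧ D < R₁ ω}]) {ω | R₁ ω ≤ x} =
        ENNReal.ofReal (1 - Real.exp (-π * c * (x ^ 2 - D ^ 2))) := by
    intro x hx
    have hx0 : 0 ≤ x := hD.trans hx
    set A : ℝ := lam₁ / c * Real.exp (-(π * c * D ^ 2)) with hAdef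
    set B : ℝ := lam₁ / c * Real.exp (-(π * c * x ^ 2)) with hBdef
    have hApos : 0 < A := by positivity
    have hBpos : 0 < B := by positivity
    have hsetsplit : ({ω | Real.sqrt a * R₁ ω < R₂ ω ∧ D < R₁ ω} ∩ {ω | R₁ ω ≤ x}) ∪
        {ω | Real.sqrt a * R₁ ω < R₂ ω ∧ x < R₁ ω} =
        {ω | Real.sqrt a * R₁ ω < R₂ ω ∧ D < R₁ ω} := by
      ext ω
      simp only [mem_union, mem_inter_iff, mem_setOf_eq]
      constructor
      · rintro (⟨⟨h1, h2⟩, _⟩ | ⟨h1, h2⟩)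
        · exact ⟨h1, h2⟩
        · exact ⟨h1, lt_of_le_of_lt hx h2⟩
      · rintro ⟨h1, h2⟩
        rcases le_or_gt (R₁ ω) x with h | h
        · exact Or.inl ⟨⟨h1, h2⟩, h⟩
        · exact Or.inr ⟨h1, h⟩
    have hdisj : Disjoint ({ω | Real.sqrt a * R₁ ω < R₂ ω ∧ D < R₁ ω} ∩ {ω | R₁ ω ≤ x})
        {ω | Real.sqrt a * R₁ ω < R₂ ω ∧ x < R₁ ω} := by
      rw [disjoint_left]
      rintro ω ⟨_, hle⟩ ⟨_, hlt⟩
      exact absurd hle (not_le.mpr hlt)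
    have hmeasEx : MeasurableSet {ω | Real.sqrt a * R₁ ω < R₂ ω ∧ x < R₁ ω} :=
      (measurableSet_lt (hm₁.const_mul _) hm₂).inter (measurableSet_lt measurable_const hm₁)
    have hsplit2 : μ ({ω | Real.sqrt a * R₁ ω < R₂ ω ∧ D < R₁ ω} ∩ {ω | R₁ ω ≤ x}) +
        ENNReal.ofReal B = ENNReal.ofReal A := by
      rw [← hE x hx0, ← hE D hD, ← measure_union hdisj hmeasEx, hsetsplit]
    have hmid : μ ({ω | Real.sqrt a * R₁ ω < R₂ ω ∧ D < R₁ ω} ∩ {ω | R₁ ω ≤ x}) =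
        ENNReal.ofReal (A - B) :=
      (ENNReal.eq_sub_of_add_eq ENNReal.ofReal_ne_top hsplit2).trans
        (ENNReal.ofReal_sub A hBpos.le).symm
    rw [ProbabilityTheory.cond_apply hmeasE, hE D hD, ← hAdef, hmid,
      ← ENNReal.ofReal_inv_of_pos hApos, ← ENNReal.ofReal_mul (by positivity)]
    congr 1
    rw [show -π * c * (x ^ 2 - D ^ 2) = -(π * c * x ^ 2) - -(π * c * D ^ 2) from by ring,
      Real.exp_sub, hAdef, hBdef]
    have h1 := Real.exp_ne_zero (-(π * c * D ^ 2))
    have h2 := Real.exp_ne_zero (-(π * c * x ^ 2))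
    field_simp
  refine ⟨?_, key, ?_⟩
  · rw [hE D hD]
    exact ENNReal.ofReal_pos.mpr (by positivity)
  · intro x hx
    rw [key x hx]
    congr 1
    have hfun : EqOn
        (fun t => 2 * π * c * t * Real.exp (-π * c * t ^ 2) / Real.exp (-π * c * D ^ 2))
        (fun t => (Real.exp (-(π * c * D ^ 2)))⁻¹ * (2 * (π * c) * t * Real.exp (-(π * c * t ^ 2))))
        (uIcc D x) := by
      intro t _
      dsimp only
      rw [show -π * c * t ^ 2 = -(π * c * t ^ 2) from by ring,
        show -π * c * D ^ 2 = -(π * c * D ^ 2) from by ring, div_eq_mul_inv]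
      ring
    rw [intervalIntegral.integral_congr hfun, intervalIntegral.integral_const_mul,
      sd_intervalIntegral]
    rw [show -π * c * (x ^ 2 - D ^ 2) = -(π * c * x ^ 2) - -(π * c * D ^ 2) from by ring,
      Real.exp_sub]
    have h1 := Real.exp_ne_zero (-(π * c * D ^ 2))
    field_simp
end

section
/- Let λ₁, λ₂ > 0, a > 0, D ≥ 0 be reals and let x ≥ √a · D. Then (1 − exp(−π λ₂ x²)) · ∫_{x / √a}^{∞} 2π λ₁ r · exp(−π λ₁ r²) dr + ∫_{D}^{x/√a} (1 − exp(−π λ₂ a r²)) · 2π λ₁ r · exp(−π λ₁ r²) dr = exp(−π λ₁ D²) − (λ₁ / (λ₁ + λ₂ a)) · exp(−π (λ₁ + λ₂ a) D²) − (λ₂ a / (λ₁ + λ₂ a)) · exp(−π (λ₁/a + λ₂) x²). -/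
open MeasureTheory Real Set Filter


lemma hd_exp (c r : ℝ) :
    HasDerivAt (fun r : ℝ => Real.exp (-π * c * r ^ 2))
      (Real.exp (-π * c * r ^ 2) * (-π * c * (2 * r))) r := by
  have h : HasDerivAt (fun r : ℝ => -π * c * r ^ 2) (-π * c * (2 * r)) r := by
    simpa [mul_comm, mul_assoc] using ((hasDerivAt_pow 2 r).const_mul (-π * c))
  simpa using h.exp

lemma tendsto_exp_neg_sq (c : ℝ) (hc : 0 < c) :
    Tendsto (fun r : ℝ => Real.exp (-π * c * r ^ 2)) atTop (nhds 0) := by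
  apply Real.tendsto_exp_atBot.comp
  have h2 : Tendsto (fun r : ℝ => r ^ 2) atTop atTop := tendsto_pow_atTop two_ne_zero
  have := h2.const_mul_atTop (mul_pos Real.pi_pos hc)
  have h3 := tendsto_neg_atBot_iff.mpr this
  refine h3.congr (fun r => by ring)

lemma ioi_integral (c lam : ℝ) (hlam : 0 < lam) (hc : 0 ≤ c) :
    ∫ r in Ioi c, 2 * π * lam * r * Real.exp (-π * lam * r ^ 2)
      = Real.exp (-π * lam * c ^ 2) := by
  have key := integral_Ioi_of_hasDerivAt_of_nonneg
    (g := fun r : ℝ => -Real.exp (-π * lam * r ^ 2))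
    (g' := fun r : ℝ => 2 * π * lam * r * Real.exp (-π * lam * r ^ 2))
    (a := c) (l := 0) ?_ ?_ ?_ ?_
  · simpa using key
  · exact (((hd_exp lam c).neg).continuousAt).continuousWithinAt
  · intro r hr
    have := (hd_exp lam r).neg
    convert this using 1
    rfl
    rfl
    rfl
    ring
  · intro r hr
    have hr0 : 0 < r := lt_of_le_of_lt hc hr
    positivity
  · simpa using (tendsto_exp_neg_sq lam hlam).neg

lemma interval_integral_eval (lam₁ lam₂ a D c : ℝ) (hlam₁ : 0 < lam₁) (hlam₂ : 0 < lam₂)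
    (ha : 0 < a) :
    (∫ r in D..c, (1 - Real.exp (-π * lam₂ * a * r ^ 2)) * (2 * π * lam₁ * r) *
        Real.exp (-π * lam₁ * r ^ 2))
    = (Real.exp (-π * lam₁ * D ^ 2) - Real.exp (-π * lam₁ * c ^ 2))
      - lam₁ / (lam₁ + lam₂ * a) *
        (Real.exp (-π * (lam₁ + lam₂ * a) * D ^ 2)
          - Real.exp (-π * (lam₁ + lam₂ * a) * c ^ 2)) := by
  set s := lam₁ + lam₂ * a with hs
  have hs0 : 0 < s := by positivity
  have key := intervalIntegral.integral_eq_sub_of_hasDerivAt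
    (f := fun r : ℝ => -Real.exp (-π * lam₁ * r ^ 2) + lam₁ / s * Real.exp (-π * s * r ^ 2))
    (f' := fun r : ℝ => (1 - Real.exp (-π * lam₂ * a * r ^ 2)) * (2 * π * lam₁ * r) *
        Real.exp (-π * lam₁ * r ^ 2)) (a := D) (b := c) ?_ ?_
  · rw [key]; ring
  · intro r hr
    have h1 := (hd_exp lam₁ r).neg
    have h2 := (hd_exp s r).const_mul (lam₁ / s)
    have := h1.add h2
    convert this using 1
    rfl
    have hexp : Real.exp (-π * s * r ^ 2)
        = Real.exp (-π * lam₂ * a * r ^ 2) * Real.exp (-π * lam₁ * r ^ 2) := by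
      rw [← Real.exp_add, hs]; ring_nf
    rw [hexp]
    field_simp
    ring
  · apply Continuous.intervalIntegrable
    continuity

/-- For reals `λ₁, λ₂ > 0`, `a > 0`, `D ≥ 0` and `x ≥ √a D`:
`(1 − e^(−π λ₂ x²)) ∫_{x/√a}^∞ 2π λ₁ r e^(−π λ₁ r²) dr
  + ∫_D^{x/√a} (1 − e^(−π λ₂ a r²)) 2π λ₁ r e^(−π λ₁ r²) dr
  = e^(−π λ₁ D²) − (λ₁/(λ₁+λ₂a)) e^(−π (λ₁+λ₂a) D²)
    − (λ₂a/(λ₁+λ₂a)) e^(−π (λ₁/a+λ₂) x²)`. -/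
theorem joint_small_cell_distance_prob (lam₁ lam₂ a D x : ℝ)
    (hlam₁ : 0 < lam₁) (hlam₂ : 0 < lam₂) (ha : 0 < a) (hD : 0 ≤ D)
    (hx : Real.sqrt a * D ≤ x) :
    (1 - Real.exp (-π * lam₂ * x ^ 2)) *
        (∫ r in Ici (x / Real.sqrt a), 2 * π * lam₁ * r * Real.exp (-π * lam₁ * r ^ 2)) +
      (∫ r in D..(x / Real.sqrt a),
        (1 - Real.exp (-π * lam₂ * a * r ^ 2)) * (2 * π * lam₁ * r) *
          Real.exp (-π * lam₁ * r ^ 2)) =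
      Real.exp (-π * lam₁ * D ^ 2) -
        lam₁ / (lam₁ + lam₂ * a) * Real.exp (-π * (lam₁ + lam₂ * a) * D ^ 2) -
        lam₂ * a / (lam₁ + lam₂ * a) * Real.exp (-π * (lam₁ / a + lam₂) * x ^ 2) := by
  have hsa : 0 < Real.sqrt a := Real.sqrt_pos.mpr ha
  set c := x / Real.sqrt a with hc
  have hc0 : 0 ≤ c := by
    apply div_nonneg _ hsa.le
    exact le_trans (by positivity) hx
  have hcsq : c ^ 2 = x ^ 2 / a := by
    rw [hc, div_pow, Real.sq_sqrt ha.le]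
  have h1 : ∫ r in Ici c, 2 * π * lam₁ * r * Real.exp (-π * lam₁ * r ^ 2)
      = Real.exp (-π * lam₁ * c ^ 2) := by
    rw [integral_Ici_eq_integral_Ioi]; exact ioi_integral c lam₁ hlam₁ hc0
  rw [h1, interval_integral_eval lam₁ lam₂ a D c hlam₁ hlam₂ ha]
  have hs0 : lam₁ + lam₂ * a ≠ 0 := by positivity
  have e1 : Real.exp (-π * (lam₁ + lam₂ * a) * c ^ 2)
      = Real.exp (-π * (lam₁ / a + lam₂) * x ^ 2) := by
    rw [hcsq]; congr 1; field_simp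
  have e2 : Real.exp (-π * lam₂ * x ^ 2) * Real.exp (-π * lam₁ * c ^ 2)
      = Real.exp (-π * (lam₁ / a + lam₂) * x ^ 2) := by
    rw [← Real.exp_add, hcsq]; congr 1; field_simp; ring
  rw [e1, ← e2]
  field_simp
  ring
end
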